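/- Under the hypotheses below, for every element z ∈ T₃, the coefficient of z in the product T̲₃ · T̲₄ ∈ ℤ[G × U] equals (n−1)(w−1)ν, where for a subset A of G × U, A̲ denotes the sum of the elements of A. (Equivalently, the structure constant p_{T₃T₄}^{T₃} of the S-ring spanned by T₀,…,T₄ equals (n−1)(w−1)ν.) -/

import Mathlib

open scoped Pointwise

/-- The sum of the elements of a finite subset `A` of a group `G`
in the integral group ring `ℤ[G]`. -/
noncomputable def grpSum (G : Type*) [Group G] (A : Finset G) : MonoidAlgebra ℤ G :=
  ∑ a ∈ A, MonoidAlgebra.of ℤ G a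

lemma grpSum_apply {H : Type*} [Group H] [DecidableEq H] (A : Finset H) (z : H) :
    (grpSum H A).coeff z = if z ∈ A then 1 else 0 := by
  unfold grpSum
  rw [MonoidAlgebra.coeff_sum, Finsupp.finset_sum_apply]
  simp only [MonoidAlgebra.of_apply, MonoidAlgebra.coeff_single, Finsupp.single_apply]
  rw [Finset.sum_ite_eq' A z (fun _ => (1:ℤ))]

lemma coeff_grpSum_mul {H : Type*} [Group H] [DecidableEq H] (A B : Finset H) (z : H) :
    (grpSum H A * grpSum H B : MonoidAlgebra ℤ H).coeff z
      = ((A ×ˢ B).filter (fun p => p.1 * p.2 = z)).card := by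
  unfold grpSum
  rw [Finset.sum_mul_sum]
  simp only [← map_mul]
  rw [← Finset.sum_product' (f := fun a b => MonoidAlgebra.of ℤ H (a * b))]
  rw [MonoidAlgebra.coeff_sum, Finsupp.finset_sum_apply]
  simp only [MonoidAlgebra.of_apply, MonoidAlgebra.coeff_single, Finsupp.single_apply]
  rw [Finset.sum_boole]

lemma sum_coeff_grpSum {H : Type*} [Group H] [Fintype H] [DecidableEq H] (A : Finset H) :
    ∑ z : H, (grpSum H A).coeff z = A.card := by
  simp only [grpSum_apply]
  rw [Finset.sum_boole]
  simp

lemma sum_coeff_mul {H : Type*} [Group H] [Fintype H] [DecidableEq H] (A B : Finset H) :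
    ∑ z : H, (grpSum H A * grpSum H B : MonoidAlgebra ℤ H).coeff z
      = A.card * B.card := by
  simp only [coeff_grpSum_mul]
  rw [← Nat.cast_sum]
  rw [← Finset.card_eq_sum_card_fiberwise (f := fun p : H × H => p.1 * p.2)
    (t := Finset.univ) (fun p _ => Finset.mem_univ _)]
  simp [Finset.card_product]

lemma card_pairs_univ {H : Type*} [Group H] [Fintype H] [DecidableEq H] (A : Finset H) (g : H) :
    ((A ×ˢ (Finset.univ : Finset H)).filter (fun p => p.1 * p.2 = g)).card = A.card := by
  apply Finset.card_bij' (fun p _ => p.1) (fun a _ => (a, a⁻¹ * g))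
  · intro p hp
    simp only [Finset.mem_filter, Finset.mem_product] at hp
    exact hp.1.1
  · intro a ha
    simp [ha]
  · intro p hp
    simp only [Finset.mem_filter, Finset.mem_product] at hp
    obtain ⟨⟨h1, -⟩, h2⟩ := hp
    ext
    · rfl
    · simp [← h2]
  · intro a ha
    rfl

lemma grpSum_sdiff {H : Type*} [Group H] [Fintype H] [DecidableEq H] (B : Finset H) :
    grpSum H (Finset.univ \ B) = grpSum H Finset.univ - grpSum H B := by
  unfold grpSum
  rw [Finset.sum_sdiff_eq_sub (Finset.subset_univ _)]

lemma coeff_add_smul {H : Type*} [Group H] (c d : ℤ) (f g : MonoidAlgebra ℤ H) (z : H) :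
    (c • f + d • g : MonoidAlgebra ℤ H).coeff z = c * f.coeff z + d * g.coeff z := by
  rw [MonoidAlgebra.coeff_add, MonoidAlgebra.coeff_smul, MonoidAlgebra.coeff_smul]
  erw [Finsupp.add_apply, Finsupp.smul_apply, Finsupp.smul_apply]; simp

lemma sum_coeff_add_smul {H : Type*} [Group H] [Fintype H] [DecidableEq H]
    (c d : ℤ) (f g : MonoidAlgebra ℤ H) :
    ∑ z : H, (c • f + d • g : MonoidAlgebra ℤ H).coeff z
      = c * (∑ z : H, f.coeff z) + d * (∑ z : H, g.coeff z) := by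
  simp only [coeff_add_smul, Finset.sum_add_distrib, Finset.mul_sum]

lemma sum_coeff_one {H : Type*} [Group H] [Fintype H] [DecidableEq H] :
    ∑ z : H, (1 : MonoidAlgebra ℤ H).coeff z = 1 := by
  rw [MonoidAlgebra.one_def]
  simp [MonoidAlgebra.coeff_single, Finsupp.single_apply]


set_option maxHeartbeats 1000000 in
theorem linked_system_structure_constant_t
    {G U : Type*} [Group G] [Fintype G] [DecidableEq G]
    [Group U] [Fintype U] [DecidableEq U]
    (N : Subgroup G) [DecidablePred (· ∈ N)]
    (n l w μ ν : ℕ) (hn : 2 ≤ n) (hN : Nat.card N = n) (hl : 1 ≤ l)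
    (hG : Fintype.card G = n ^ 2 * l) (hU : Fintype.card U = w + 1) (hw : 2 ≤ w)
    (X : U → Finset G)
    (hXinv : ∀ u : U, u ≠ 1 → (X u)⁻¹ = X u⁻¹)
    (hXtrans : ∀ u : U, u ≠ 1 → ∀ g : G, ((X u).filter (fun x => g⁻¹ * x ∈ N)).card = 1)
    (hXX : ∀ u : U, u ≠ 1 →
      grpSum G (X u) * grpSum G (X u⁻¹) =
        ((n * l : ℕ) : ℤ) • (1 : MonoidAlgebra ℤ G) +
          (l : ℤ) • grpSum G (Finset.univ.filter (· ∉ N)))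
    (hXY : ∀ u v : U, u ≠ 1 → v ≠ 1 → u * v ≠ 1 →
      grpSum G (X u) * grpSum G (X v) =
        (μ : ℤ) • grpSum G (X (u * v)) + (ν : ℤ) • grpSum G (Finset.univ \ X (u * v)))
    (T₀ T₁ T₂ T₃ T₄ : Finset (G × U))
    (hT₀ : T₀ = {(1, 1)})
    (hT₁ : T₁ = ((Finset.univ.filter (· ∈ N)).erase 1) ×ˢ {(1 : U)})
    (hT₂ : T₂ = (Finset.univ.filter (· ∉ N)) ×ˢ {(1 : U)})
    (hT₃ : T₃ = Finset.univ.filter (fun p : G × U => p.2 ≠ 1 ∧ p.1 ∈ X p.2))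
    (hT₄ : T₄ = Finset.univ.filter (fun p : G × U => p.2 ≠ 1 ∧ p.1 ∉ X p.2)) :
    ∀ z ∈ T₃,
      ((grpSum (G × U) T₃ * grpSum (G × U) T₄ : MonoidAlgebra ℤ (G × U)).coeff :
          (G × U) →₀ ℤ) z = ((n - 1) * (w - 1) * ν : ℕ) := by
  -- basic cardinalities
  have hnle : n ≤ n ^ 2 * l := by nlinarith
  have hNfil : (Finset.univ.filter (· ∈ N)).card = n := by
    rw [← Fintype.card_subtype]
    rw [← Nat.card_eq_fintype_card]
    exact hN
  have hnot : (Finset.univ.filter (· ∉ N)).card = n ^ 2 * l - n := by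
    rw [Finset.filter_not, Finset.card_sdiff_of_subset (Finset.filter_subset _ _),
      Finset.card_univ, hG, hNfil]
  have hcard : ∀ u : U, u ≠ 1 → (X u).card = n * l := by
    intro u hu
    have h1 := congrArg (fun f : MonoidAlgebra ℤ G => ∑ z : G, f.coeff z) (hXX u hu)
    simp only [sum_coeff_mul, sum_coeff_add_smul, sum_coeff_one, sum_coeff_grpSum] at h1
    have h2 : (X u⁻¹).card = (X u).card := by
      rw [← hXinv u hu, Finset.card_inv]
    rw [h2, hnot] at h1
    have h3 : ((X u).card : ℤ) * (X u).card = ((n * l : ℕ) : ℤ) * ((n * l : ℕ) : ℤ) := by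
      push_cast [Nat.cast_sub hnle] at h1 ⊢
      nlinarith [h1]
    have h4 : ((X u).card : ℤ) = ((n * l : ℕ) : ℤ) := by nlinarith [h3, Int.natCast_nonneg (X u).card, Int.natCast_nonneg (n*l)]
    exact_mod_cast h4
  -- the key numeric identity n*l - μ = (n-1)*ν
  have hkey : ((n * l : ℕ) : ℤ) - μ = ((n : ℤ) - 1) * ν := by
    have hcard3 : 3 ≤ Fintype.card U := by omega
    have : Nontrivial U := Fintype.one_lt_card_iff_nontrivial.mp (by omega)
    obtain ⟨u, hu⟩ := exists_ne (1 : U)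
    have hex : ((Finset.univ : Finset U) \ {1, u⁻¹}).Nonempty := by
      rw [← Finset.card_pos, Finset.card_sdiff_of_subset (Finset.subset_univ _), Finset.card_univ, hU]
      have : ({1, u⁻¹} : Finset U).card ≤ 2 := Finset.card_le_two
      omega
    obtain ⟨v, hv⟩ := hex
    simp only [Finset.mem_sdiff, Finset.mem_insert, Finset.mem_singleton, not_or] at hv
    have hv1 : v ≠ 1 := hv.2.1
    have huv : u * v ≠ 1 := by
      intro h
      exact hv.2.2 (eq_inv_of_mul_eq_one_right h)
    have h1 := congrArg (fun f : MonoidAlgebra ℤ G => ∑ z : G, f.coeff z) (hXY u v hu hv1 huv)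
    simp only [sum_coeff_mul, sum_coeff_add_smul, sum_coeff_grpSum] at h1
    rw [hcard u hu, hcard v hv1, hcard (u*v) huv] at h1
    have hcsd : (Finset.univ \ X (u*v)).card = n^2*l - n*l := by
      rw [Finset.card_sdiff_of_subset (Finset.subset_univ _), hcard (u*v) huv, Finset.card_univ, hG]
    rw [hcsd] at h1
    have hnll : n * l ≤ n^2*l := by nlinarith
    have ha : ((n*l : ℕ) : ℤ) ≠ 0 := by positivity
    push_cast [Nat.cast_sub hnll] at h1
    have h2 : ((n*l:ℕ):ℤ) * (((n*l:ℕ):ℤ) - μ - ((n:ℤ)-1)*ν) = 0 := by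
      push_cast
      nlinarith [h1]
    have h3 := (mul_eq_zero.mp h2).resolve_left ha
    push_cast at h3 ⊢
    linarith
  -- main counting
  intro z hz
  obtain ⟨g, c⟩ := z
  rw [hT₃, Finset.mem_filter] at hz
  obtain ⟨-, hc, hg⟩ := hz
  replace hc : c ≠ 1 := hc
  replace hg : g ∈ X c := hg
  rw [coeff_grpSum_mul]
  set S := ((T₃ ×ˢ T₄).filter (fun p => p.1 * p.2 = (g, c))) with hS
  set I := ((Finset.univ.erase (1:U)).erase c) with hI
  have hmemS : ∀ p : (G × U) × (G × U), p ∈ S ↔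
      (p.1.2 ≠ 1 ∧ p.1.1 ∈ X p.1.2) ∧ (p.2.2 ≠ 1 ∧ p.2.1 ∉ X p.2.2) ∧
        p.1.1 * p.2.1 = g ∧ p.1.2 * p.2.2 = c := by
    intro p
    simp only [hS, Finset.mem_filter, Finset.mem_product, hT₃, hT₄,
      Finset.mem_univ, true_and, Prod.ext_iff, Prod.fst_mul, Prod.snd_mul]
    tauto
  have hfib : ∀ p ∈ S, p.1.2 ∈ I := by
    intro p hp
    obtain ⟨⟨h1, h2⟩, ⟨h3, h4⟩, h5, h6⟩ := (hmemS p).mp hp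
    simp only [hI, Finset.mem_erase, Finset.mem_univ, and_true]
    refine ⟨?_, h1⟩
    intro hpc
    apply h3
    rw [hpc] at h6
    have : c * p.2.2 = c * 1 := by rw [mul_one]; exact h6
    exact mul_left_cancel this
  rw [Finset.card_eq_sum_card_fiberwise hfib]
  have hterm : ∀ u ∈ I, ((S.filter (fun p => p.1.2 = u)).card : ℤ) = ((n:ℤ)-1) * ν := by
    intro u hu'
    simp only [hI, Finset.mem_erase, Finset.mem_univ, and_true] at hu'
    obtain ⟨huc, hu⟩ := hu'
    have hv1 : u⁻¹ * c ≠ 1 := fun h => huc (inv_mul_eq_one.mp h)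
    have hbij : (S.filter (fun p => p.1.2 = u)).card
        = (((X u) ×ˢ (Finset.univ \ X (u⁻¹ * c))).filter (fun q => q.1 * q.2 = g)).card := by
      refine Finset.card_bij' (fun p _ => (p.1.1, p.2.1))
        (fun q _ => ((q.1, u), (q.2, u⁻¹ * c))) ?hi ?hj ?left ?right
      case hi =>
        intro p hp
        rw [Finset.mem_filter] at hp
        obtain ⟨hpS, hpu⟩ := hp
        obtain ⟨⟨h1, h2⟩, ⟨h3, h4⟩, h5, h6⟩ := (hmemS p).mp hpS
        have hp22 : p.2.2 = u⁻¹ * c := by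
          rw [← h6, hpu]; group
        simp only [Finset.mem_filter, Finset.mem_product, Finset.mem_sdiff,
          Finset.mem_univ, true_and]
        rw [hpu] at h2
        rw [hp22] at h4
        exact ⟨⟨h2, h4⟩, h5⟩
      case hj =>
        intro q hq
        simp only [Finset.mem_filter, Finset.mem_product, Finset.mem_sdiff,
          Finset.mem_univ, true_and] at hq
        obtain ⟨⟨hq1, hq2⟩, hq3⟩ := hq
        rw [Finset.mem_filter]
        refine ⟨(hmemS _).mpr ⟨⟨hu, hq1⟩, ⟨hv1, hq2⟩, hq3, ?_⟩, rfl⟩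
        show u * (u⁻¹ * c) = c
        group
      case left =>
        rintro ⟨⟨x, u'⟩, y, v'⟩ hp
        rw [Finset.mem_filter] at hp
        obtain ⟨hpS, hpu⟩ := hp
        obtain ⟨⟨h1, h2⟩, ⟨h3, h4⟩, h5, h6⟩ := (hmemS _).mp hpS
        have hpu' : u' = u := hpu
        have hp22 : v' = u⁻¹ * c := by
          rw [← h6, hpu']; group
        subst hpu'
        subst hp22
        rfl
      case right =>
        intro q hq
        rfl
    rw [hbij, ← coeff_grpSum_mul, grpSum_sdiff, mul_sub]
    rw [MonoidAlgebra.coeff_sub]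
    erw [Finsupp.sub_apply]
    rw [coeff_grpSum_mul (X u) Finset.univ g, card_pairs_univ, hcard u hu]
    have huvc : u * (u⁻¹ * c) = c := by group
    have h2 := hXY u (u⁻¹ * c) hu hv1 (by rw [huvc]; exact hc)
    rw [huvc] at h2
    rw [h2, coeff_add_smul, grpSum_apply, grpSum_apply]
    rw [if_pos hg, if_neg (by simp [hg])]
    rw [mul_one, mul_zero, add_zero]
    exact hkey
  have hIcard : I.card = w - 1 := by
    rw [hI, Finset.card_erase_of_mem (by simp [hc]),
      Finset.card_erase_of_mem (Finset.mem_univ _), Finset.card_univ, hU]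
    omega
  push_cast
  rw [Finset.sum_congr rfl hterm, Finset.sum_const, hIcard, nsmul_eq_mul,
    Nat.cast_sub (by omega : 1 ≤ w), Nat.cast_sub (by omega : 1 ≤ n)]
  push_cast
  ring
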